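/- Let Y₁, …, Y_k be i.i.d. real random variables on a probability space with |Yᵢ| ≤ L almost surely for some L > 0, and let ε > 0. Define μ = E[Y₁], σ² = Var(Y₁), ρ = σ²/(μ² + σ² + ε), and the empirical estimates μ̂ = (1/k)∑ᵢ Yᵢ, σ̂² = (1/k)∑ᵢ (Yᵢ − μ̂)², ρ̂_k = σ̂²/(μ̂² + σ̂² + ε). Then for every Δ > 0, P( |ρ̂_k − ρ| ≥ Δ ) ≤ 6 exp( −kΔ² / (32 M² L⁴ (4L² + 1)) ), where M = √(ε² + L⁴)/ε². -/

import Mathlib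

open MeasureTheory ProbabilityTheory Finset

section HoeffdingHelpers
open Real


lemma hoeff_log_core (p : ℝ) (hp0 : 0 ≤ p) (hp1 : p ≤ 1) (h : ℝ) :
    (1 - p) * exp (-p * h) + p * exp ((1 - p) * h) ≤ exp (h ^ 2 / 8) := by
  have hD : ∀ x : ℝ, 0 < 1 - p + p * exp x := by
    intro x
    rcases hp0.eq_or_lt with h0 | h0
    · simp [← h0]
    · linarith [mul_pos h0 (exp_pos x)]
  have hDd : ∀ x : ℝ, HasDerivAt (fun y => 1 - p + p * exp y) (p * exp x) x := by
    intro x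
    exact ((Real.hasDerivAt_exp x).const_mul p).const_add (1 - p)
  set F : ℝ → ℝ := fun x => x ^ 2 / 8 + p * x - log (1 - p + p * exp x) with hFdef
  set g : ℝ → ℝ := fun x => x / 4 + p - p * exp x / (1 - p + p * exp x) with hgdef
  have hF : ∀ x : ℝ, HasDerivAt F (g x) x := by
    intro x
    have h1 : HasDerivAt (fun y : ℝ => y ^ 2 / 8) (x / 4) x := by
      have := (hasDerivAt_pow 2 x).div_const 8
      refine this.congr_deriv ?_
      ring
    have h2 : HasDerivAt (fun y : ℝ => p * y) p x := by
      simpa using (hasDerivAt_id x).const_mul p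
    have h3 : HasDerivAt (fun y => log (1 - p + p * exp y)) (p * exp x / (1 - p + p * exp x)) x :=
      (hDd x).log (hD x).ne'
    exact (h1.add h2).sub h3
  have hg : ∀ x : ℝ, HasDerivAt g (1 / 4 - p * exp x * (1 - p) / (1 - p + p * exp x) ^ 2) x := by
    intro x
    have h4 : HasDerivAt (fun y => p * exp y / (1 - p + p * exp y))
        ((p * exp x * (1 - p + p * exp x) - p * exp x * (p * exp x)) / (1 - p + p * exp x) ^ 2) x :=
      ((Real.hasDerivAt_exp x).const_mul p).div (hDd x) (hD x).ne'
    have h5 : HasDerivAt (fun y : ℝ => y / 4 + p) (1 / 4) x := by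
      simpa using ((hasDerivAt_id x).div_const 4).add_const p
    have := h5.sub h4
    refine this.congr_deriv ?_
    have hne : (1 - p + p * exp x) ^ 2 ≠ 0 := pow_ne_zero _ (hD x).ne'
    ring
  have hFdiff : Differentiable ℝ F := fun x => (hF x).differentiableAt
  have hgmono : Monotone g :=
    monotone_of_deriv_nonneg (fun x => (hg x).differentiableAt) (by
      intro x
      rw [(hg x).deriv]
      have hDx := hD x
      have hex := exp_pos x
      rw [sub_nonneg, div_le_iff₀ (by positivity)]
      nlinarith [sq_nonneg (1 - p - p * exp x)])
  have hg0 : g 0 = 0 := by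
    simp [hgdef, Real.exp_zero]
  have hF0 : F 0 = 0 := by simp [hFdef]
  have hFnonneg : ∀ x : ℝ, 0 ≤ F x := by
    intro x
    rcases le_total 0 x with hx | hx
    · have : F 0 ≤ F x := by
        refine monotoneOn_of_deriv_nonneg (convex_Ici 0)
          hFdiff.continuous.continuousOn hFdiff.differentiableOn ?_
          Set.self_mem_Ici hx hx
        intro y hy
        rw [(hF y).deriv, ← hg0]
        exact hgmono (le_of_lt (by simpa using hy))
      linarith
    · have : F 0 ≤ F x := by
        refine antitoneOn_of_deriv_nonpos (convex_Iic 0)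
          hFdiff.continuous.continuousOn hFdiff.differentiableOn ?_
          hx Set.self_mem_Iic hx
        intro y hy
        rw [(hF y).deriv, ← hg0]
        exact hgmono (le_of_lt (by simpa using hy))
      linarith
  -- conclude
  have hkey : 0 ≤ F h := hFnonneg h
  have hlog : log (1 - p + p * exp h) ≤ h ^ 2 / 8 + p * h := by
    simp only [hFdef] at hkey; linarith
  have hDh : (1 - p + p * exp h) ≤ exp (h ^ 2 / 8 + p * h) := by
    rw [← Real.exp_log (hD h)]
    exact exp_le_exp.2 hlog
  have heq : (1 - p) * exp (-p * h) + p * exp ((1 - p) * h)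
      = exp (-p * h) * (1 - p + p * exp h) := by
    rw [show (1 - p) * h = h + (-p * h) by ring, Real.exp_add]
    ring
  rw [heq]
  calc exp (-p * h) * (1 - p + p * exp h)
      ≤ exp (-p * h) * exp (h ^ 2 / 8 + p * h) :=
        mul_le_mul_of_nonneg_left hDh (exp_pos _).le
    _ = exp (h ^ 2 / 8) := by rw [← Real.exp_add]; ring_nf


lemma hoeff_mgf {Ω : Type*} [MeasurableSpace Ω] {P : Measure Ω} [IsProbabilityMeasure P]
    {X : Ω → ℝ} (hX : Measurable X) {a b : ℝ} (hab : a ≤ b)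
    (hmem : ∀ᵐ ω ∂P, X ω ∈ Set.Icc a b) (hmean : ∫ ω, X ω ∂P = 0) (t : ℝ) :
    mgf X P t ≤ Real.exp (t ^ 2 * (b - a) ^ 2 / 8) := by
  have hXabs : ∀ᵐ ω ∂P, ‖X ω‖ ≤ max |a| |b| := by
    filter_upwards [hmem] with ω hω
    rw [Real.norm_eq_abs, abs_le]
    constructor
    · calc -(max |a| |b|) ≤ -|a| := by simp
        _ ≤ a := neg_abs_le a
        _ ≤ X ω := hω.1
    · calc X ω ≤ b := hω.2
        _ ≤ |b| := le_abs_self b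
        _ ≤ max |a| |b| := le_max_right _ _
  have hint : Integrable X P :=
    Integrable.mono' (integrable_const _) hX.aestronglyMeasurable hXabs
  have ha0 : a ≤ 0 := by
    have : ∫ _ω, a ∂P ≤ ∫ ω, X ω ∂P :=
      integral_mono_ae (integrable_const a) hint (by filter_upwards [hmem] with ω hω using hω.1)
    simpa [hmean] using this
  have hb0 : 0 ≤ b := by
    have : ∫ ω, X ω ∂P ≤ ∫ _ω, b ∂P :=
      integral_mono_ae hint (integrable_const b) (by filter_upwards [hmem] with ω hω using hω.2)
    simpa [hmean] using this
  rcases hab.eq_or_lt with heq | hlt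
  · -- a = b, so a = b = 0 and X = 0 a.e.
    have ha : a = 0 := le_antisymm ha0 (heq ▸ hb0)
    have hb : b = 0 := heq ▸ ha
    have hX0 : ∀ᵐ ω ∂P, X ω = 0 := by
      filter_upwards [hmem] with ω hω
      have := hω.1; have := hω.2
      subst ha; subst hb
      linarith
    have : mgf X P t = 1 := by
      rw [mgf]
      rw [integral_congr_ae (g := fun _ => (1:ℝ)) (by filter_upwards [hX0] with ω h using by simp [h])]
      simp
    rw [this]
    exact Real.one_le_exp (by positivity)
  · have hba : (0:ℝ) < b - a := sub_pos.2 hlt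
    have hi : Integrable (fun ω => exp (t * X ω)) P := by
      refine Integrable.mono' (integrable_const (exp (|t| * max |a| |b|)))
        ((hX.const_mul t).exp).aestronglyMeasurable ?_
      filter_upwards [hXabs] with ω hω
      rw [Real.norm_eq_abs, Real.abs_exp]
      refine Real.exp_le_exp.2 ?_
      calc t * X ω ≤ |t * X ω| := le_abs_self _
        _ = |t| * |X ω| := abs_mul _ _
        _ ≤ |t| * max |a| |b| := by
            refine mul_le_mul_of_nonneg_left ?_ (abs_nonneg t)
            simpa [Real.norm_eq_abs] using hω
    -- linear upper bound function
    set c1 : ℝ := (exp (t * b) - exp (t * a)) / (b - a) with hc1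
    set c2 : ℝ := (b * exp (t * a) - a * exp (t * b)) / (b - a) with hc2
    have hchord : ∀ᵐ ω ∂P, exp (t * X ω) ≤ c1 * X ω + c2 := by
      filter_upwards [hmem] with ω hω
      set x := X ω
      set θ : ℝ := (x - a) / (b - a) with hθ
      have hθ0 : 0 ≤ θ := div_nonneg (by linarith [hω.1]) hba.le
      have hθ1 : θ ≤ 1 := by
        rw [hθ, div_le_one hba]
        linarith [hω.2]
      have key := convexOn_exp.2 (Set.mem_univ (t * a)) (Set.mem_univ (t * b))
        (by linarith : (0:ℝ) ≤ 1 - θ) hθ0 (by ring)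
      have harg : (1 - θ) • (t * a) + θ • (t * b) = t * x := by
        simp only [smul_eq_mul, hθ]
        field_simp
        ring
      rw [harg] at key
      calc exp (t * x) ≤ (1 - θ) * exp (t * a) + θ * exp (t * b) := by
            simpa [smul_eq_mul] using key
        _ = c1 * x + c2 := by
            rw [hθ, hc1, hc2]
            field_simp
            ring
    have hilin : Integrable (fun ω => c1 * X ω + c2) P :=
      (hint.const_mul c1).add (integrable_const c2)
    have hbound : mgf X P t ≤ c2 := by
      calc mgf X P t = ∫ ω, exp (t * X ω) ∂P := rfl
        _ ≤ ∫ ω, (c1 * X ω + c2) ∂P := integral_mono_ae hi hilin hchord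
        _ = c1 * (∫ ω, X ω ∂P) + c2 := by
            rw [integral_add (hint.const_mul c1) (integrable_const c2),
              integral_const_mul, integral_const]
            simp
        _ = c2 := by rw [hmean]; ring
    -- apply the core inequality
    set p : ℝ := -a / (b - a) with hp
    set h : ℝ := t * (b - a) with hh
    have hp0 : 0 ≤ p := div_nonneg (by linarith) hba.le
    have hp1 : p ≤ 1 := by
      rw [hp, div_le_one hba]
      linarith
    have hcore := hoeff_log_core p hp0 hp1 h
    have e1 : -p * h = t * a := by rw [hp, hh]; field_simp; try ring
    have e2 : (1 - p) * h = t * b := by rw [hp, hh]; field_simp; try ring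
    have e3 : (1 : ℝ) - p = b / (b - a) := by rw [hp]; field_simp; try ring
    have e4 : h ^ 2 / 8 = t ^ 2 * (b - a) ^ 2 / 8 := by rw [hh]; ring
    rw [e1, e2, e4] at hcore
    have e5 : (1 - p) * exp (t * a) + p * exp (t * b) = c2 := by
      rw [e3, hp, hc2]
      field_simp
      ring
    rw [e5] at hcore
    exact hbound.trans hcore


lemma integrable_of_mem_Icc {Ω : Type*} [MeasurableSpace Ω] {P : Measure Ω}
    [IsProbabilityMeasure P] {X : Ω → ℝ} (hX : Measurable X) {a b : ℝ}
    (hmem : ∀ᵐ ω ∂P, X ω ∈ Set.Icc a b) : Integrable X P := by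
  refine Integrable.mono' (integrable_const (max |a| |b|)) hX.aestronglyMeasurable ?_
  filter_upwards [hmem] with ω hω
  rw [Real.norm_eq_abs, abs_le]
  exact ⟨by calc -(max |a| |b|) ≤ -|a| := by simp
            _ ≤ a := neg_abs_le a
            _ ≤ X ω := hω.1,
    by calc X ω ≤ b := hω.2
            _ ≤ |b| := le_abs_self b
            _ ≤ max |a| |b| := le_max_right _ _⟩

lemma integrable_exp_of_mem_Icc {Ω : Type*} [MeasurableSpace Ω] {P : Measure Ω}
    [IsProbabilityMeasure P] {X : Ω → ℝ} (hX : Measurable X) {a b : ℝ}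
    (hmem : ∀ᵐ ω ∂P, X ω ∈ Set.Icc a b) (s : ℝ) :
    Integrable (fun ω => exp (s * X ω)) P := by
  refine Integrable.mono' (integrable_const (exp (|s| * max |a| |b|)))
    ((hX.const_mul s).exp).aestronglyMeasurable ?_
  filter_upwards [hmem] with ω hω
  rw [Real.norm_eq_abs, Real.abs_exp]
  refine Real.exp_le_exp.2 ?_
  calc s * X ω ≤ |s * X ω| := le_abs_self _
    _ = |s| * |X ω| := abs_mul _ _
    _ ≤ |s| * max |a| |b| := by
        refine mul_le_mul_of_nonneg_left ?_ (abs_nonneg s)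
        rw [abs_le]
        exact ⟨by calc -(max |a| |b|) ≤ -|a| := by simp
                  _ ≤ a := neg_abs_le a
                  _ ≤ X ω := hω.1,
          by calc X ω ≤ b := hω.2
                  _ ≤ |b| := le_abs_self b
                  _ ≤ max |a| |b| := le_max_right _ _⟩

lemma hoeff_ineq_ge {Ω : Type*} [MeasurableSpace Ω] {P : Measure Ω} [IsProbabilityMeasure P]
    {k : ℕ} (hk : 0 < k) (Z : Fin k → Ω → ℝ) (hmeas : ∀ i, Measurable (Z i))
    (hindep : iIndepFun Z P)
    {a b : ℝ} (hab : a < b) (hmem : ∀ i, ∀ᵐ ω ∂P, Z i ω ∈ Set.Icc a b)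
    {m : ℝ} (hm : ∀ i, ∫ ω, Z i ω ∂P = m)
    {t : ℝ} (ht : 0 < t) :
    P {ω | t ≤ (1 / k : ℝ) * (∑ i, Z i ω) - m} ≤
      ENNReal.ofReal (Real.exp (-2 * k * t ^ 2 / (b - a) ^ 2)) := by
  have hk0 : (0:ℝ) < (k:ℝ) := by exact_mod_cast hk
  have hba : (0:ℝ) < b - a := sub_pos.2 hab
  set X : Fin k → Ω → ℝ := fun i ω => Z i ω - m with hXdef
  have hXmeas : ∀ i, Measurable (X i) := fun i => (hmeas i).sub measurable_const
  have hXindep : iIndepFun X P := by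
    have := hindep.comp (fun _ => fun x => x - m) (fun _ => measurable_id.sub measurable_const)
    exact this
  have hXmem : ∀ i, ∀ᵐ ω ∂P, X i ω ∈ Set.Icc (a - m) (b - m) := by
    intro i
    filter_upwards [hmem i] with ω hω
    exact ⟨by simpa [hXdef] using sub_le_sub_right hω.1 m,
      by simpa [hXdef] using sub_le_sub_right hω.2 m⟩
  have hXmean : ∀ i, ∫ ω, X i ω ∂P = 0 := by
    intro i
    rw [hXdef]
    rw [integral_sub (integrable_of_mem_Icc (hmeas i) (hmem i)) (integrable_const m)]
    simp [hm i]
  set lam : ℝ := 4 * t / (b - a) ^ 2 with hlam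
  have hlam0 : 0 ≤ lam := by positivity
  have hintexp : ∀ i, Integrable (fun ω => exp (lam * X i ω)) P := fun i =>
    integrable_exp_of_mem_Icc (hXmeas i) (hXmem i) lam
  have hmgf : ∀ i, mgf (X i) P lam ≤ Real.exp (lam ^ 2 * (b - a) ^ 2 / 8) := by
    intro i
    have := hoeff_mgf (hXmeas i) (by linarith : a - m ≤ b - m) (hXmem i) (hXmean i) lam
    simpa using this
  have hS : ∀ ω, (∑ i, X i) ω = (∑ i, Z i ω) - k * m := by
    intro ω
    simp [hXdef, Finset.sum_sub_distrib, Finset.sum_apply, Finset.card_univ]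
  have hset : {ω | t ≤ (1 / k : ℝ) * (∑ i, Z i ω) - m} = {ω | (k:ℝ) * t ≤ (∑ i, X i) ω} := by
    ext ω
    simp only [Set.mem_setOf_eq, hS]
    have heq : (1 / (k:ℝ)) * (∑ i, Z i ω) - m = ((∑ i, Z i ω) - k * m) / k := by
      field_simp
    rw [heq, le_div_iff₀ hk0, mul_comm]
  rw [hset]
  have hchern := measure_ge_le_exp_mul_mgf (X := ∑ i, X i) (μ := P) ((k:ℝ) * t) hlam0
    (hXindep.integrable_exp_mul_sum hXmeas (fun i _ => hintexp i))
  have hmgfS : mgf (∑ i, X i) P lam ≤ Real.exp (lam ^ 2 * (b - a) ^ 2 / 8) ^ k := by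
    rw [hXindep.mgf_sum hXmeas]
    calc ∏ i, mgf (X i) P lam ≤ ∏ _i : Fin k, Real.exp (lam ^ 2 * (b - a) ^ 2 / 8) :=
          Finset.prod_le_prod (fun i _ => mgf_nonneg) (fun i _ => hmgf i)
      _ = Real.exp (lam ^ 2 * (b - a) ^ 2 / 8) ^ k := by
          rw [Finset.prod_const, Finset.card_univ, Fintype.card_fin]
  have hfinal : exp (-lam * ((k:ℝ) * t)) * mgf (∑ i, X i) P lam ≤
      Real.exp (-2 * k * t ^ 2 / (b - a) ^ 2) := by
    calc exp (-lam * ((k:ℝ) * t)) * mgf (∑ i, X i) P lam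
        ≤ exp (-lam * ((k:ℝ) * t)) * Real.exp (lam ^ 2 * (b - a) ^ 2 / 8) ^ k :=
          mul_le_mul_of_nonneg_left hmgfS (exp_pos _).le
      _ = Real.exp (-2 * k * t ^ 2 / (b - a) ^ 2) := by
          rw [← Real.exp_nat_mul, ← Real.exp_add]
          congr 1
          rw [hlam]
          field_simp
          ring
  refine (ENNReal.le_ofReal_iff_toReal_le (measure_ne_top P _) (exp_pos _).le).2 ?_
  exact hchern.trans hfinal

lemma hoeff_ineq_abs {Ω : Type*} [MeasurableSpace Ω] {P : Measure Ω} [IsProbabilityMeasure P]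
    {k : ℕ} (hk : 0 < k) (Z : Fin k → Ω → ℝ) (hmeas : ∀ i, Measurable (Z i))
    (hindep : iIndepFun Z P)
    {a b : ℝ} (hab : a < b) (hmem : ∀ i, ∀ᵐ ω ∂P, Z i ω ∈ Set.Icc a b)
    {m : ℝ} (hm : ∀ i, ∫ ω, Z i ω ∂P = m)
    {t : ℝ} (ht : 0 < t) :
    P {ω | t ≤ |(1 / k : ℝ) * (∑ i, Z i ω) - m|} ≤
      ENNReal.ofReal (2 * Real.exp (-2 * k * t ^ 2 / (b - a) ^ 2)) := by
  have hsub : {ω | t ≤ |(1 / k : ℝ) * (∑ i, Z i ω) - m|} ⊆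
      {ω | t ≤ (1 / k : ℝ) * (∑ i, Z i ω) - m} ∪
      {ω | t ≤ (1 / k : ℝ) * (∑ i, (fun j ω' => -Z j ω') i ω) - (-m)} := by
    intro ω hω
    simp only [Set.mem_setOf_eq] at hω
    rcases le_abs.1 hω with h | h
    · exact Or.inl h
    · refine Or.inr ?_
      show t ≤ (1 / (k:ℝ)) * (∑ i, -Z i ω) - (-m)
      rw [Finset.sum_neg_distrib]
      ring_nf at h ⊢
      linarith
  have h1 := hoeff_ineq_ge hk Z hmeas hindep hab hmem hm ht
  have h2 : P {ω | t ≤ (1 / k : ℝ) * (∑ i, (fun j ω' => -Z j ω') i ω) - (-m)} ≤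
      ENNReal.ofReal (Real.exp (-2 * k * t ^ 2 / (b - a) ^ 2)) := by
    have hmemneg : ∀ i, ∀ᵐ ω ∂P, -Z i ω ∈ Set.Icc (-b) (-a) := by
      intro i
      filter_upwards [hmem i] with ω hω
      exact ⟨neg_le_neg hω.2, neg_le_neg hω.1⟩
    have := hoeff_ineq_ge hk (fun j ω' => -Z j ω')
      (fun i => (hmeas i).neg)
      (hindep.comp (fun _ => fun x => -x) (fun _ => measurable_neg))
      (neg_lt_neg hab) hmemneg
      (m := -m) (fun i => by rw [integral_neg, hm i]) ht
    have hrange : (-a - -b) = b - a := by ring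
    rwa [hrange] at this
  calc P {ω | t ≤ |(1 / k : ℝ) * (∑ i, Z i ω) - m|}
      ≤ P ({ω | t ≤ (1 / k : ℝ) * (∑ i, Z i ω) - m} ∪
        {ω | t ≤ (1 / k : ℝ) * (∑ i, (fun j ω' => -Z j ω') i ω) - (-m)}) := measure_mono hsub
    _ ≤ _ + _ := measure_union_le _ _
    _ ≤ ENNReal.ofReal (Real.exp (-2 * k * t ^ 2 / (b - a) ^ 2)) +
        ENNReal.ofReal (Real.exp (-2 * k * t ^ 2 / (b - a) ^ 2)) := add_le_add h1 h2
    _ = ENNReal.ofReal (2 * Real.exp (-2 * k * t ^ 2 / (b - a) ^ 2)) := by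
        rw [← ENNReal.ofReal_add (exp_pos _).le (exp_pos _).le]
        congr 1
        ring


set_option maxHeartbeats 1000000 in
theorem lgi_concentration
    {Ω : Type*} [MeasurableSpace Ω] (P : Measure Ω) [IsProbabilityMeasure P]
    (k : ℕ) (hk : 0 < k) (Y : Fin k → Ω → ℝ) (hmeas : ∀ i, Measurable (Y i))
    (hindep : iIndepFun Y P)
    (hident : ∀ i, IdentDistrib (Y i) (Y ⟨0, hk⟩) P P)
    (L : ℝ) (hL : 0 < L) (hbound : ∀ i, ∀ᵐ ω ∂P, |Y i ω| ≤ L)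
    (ε : ℝ) (hε : 0 < ε) (Δ : ℝ) (hΔ : 0 < Δ) :
    let μ : ℝ := ∫ ω, Y ⟨0, hk⟩ ω ∂P
    let σsq : ℝ := (∫ ω, (Y ⟨0, hk⟩ ω) ^ 2 ∂P) - μ ^ 2
    let ρ : ℝ := σsq / (μ ^ 2 + σsq + ε)
    let μhat : Ω → ℝ := fun ω => (1 / k) * ∑ i, Y i ω
    let σsqhat : Ω → ℝ := fun ω => (1 / k) * ∑ i, (Y i ω - μhat ω) ^ 2
    let ρhat : Ω → ℝ := fun ω => σsqhat ω / ((μhat ω) ^ 2 + σsqhat ω + ε)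
    let M : ℝ := Real.sqrt (ε ^ 2 + L ^ 4) / ε ^ 2
    P {ω | Δ ≤ |ρhat ω - ρ|} ≤
      ENNReal.ofReal (6 * Real.exp (-(k * Δ ^ 2) /
        (32 * M ^ 2 * L ^ 4 * (4 * L ^ 2 + 1)))) := by
  intro μ σsq ρ μhat σsqhat ρhat M
  set j0 : Fin k := ⟨0, hk⟩ with hj0
  have hk0 : (0:ℝ) < (k:ℝ) := by exact_mod_cast hk
  set m2 : ℝ := ∫ ω, (Y j0 ω) ^ 2 ∂P with hm2def
  set m2hat : Ω → ℝ := fun ω => (1 / k : ℝ) * ∑ i, (Y i ω) ^ 2 with hm2hatdef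
  -- basic a.e. membership facts
  have hmemY : ∀ i, ∀ᵐ ω ∂P, Y i ω ∈ Set.Icc (-L) L := by
    intro i
    filter_upwards [hbound i] with ω hω
    exact ⟨neg_le_of_abs_le hω, le_of_abs_le hω⟩
  have hmemY2 : ∀ i, ∀ᵐ ω ∂P, (Y i ω) ^ 2 ∈ Set.Icc 0 (L ^ 2) := by
    intro i
    filter_upwards [hbound i] with ω hω
    refine ⟨sq_nonneg _, ?_⟩
    calc (Y i ω) ^ 2 = |Y i ω| ^ 2 := (sq_abs _).symm
      _ ≤ L ^ 2 := pow_le_pow_left₀ (abs_nonneg _) hω 2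
  -- integrability and population bounds
  have hYint : Integrable (Y j0) P := integrable_of_mem_Icc (hmeas j0) (hmemY j0)
  have hY2int : Integrable (fun ω => (Y j0 ω) ^ 2) P :=
    integrable_of_mem_Icc ((hmeas j0).pow_const 2) (hmemY2 j0)
  have hμL : |μ| ≤ L := by
    have := norm_integral_le_of_norm_le_const (μ := P) (f := Y j0) (C := L)
      (by filter_upwards [hbound j0] with ω hω using by simpa using hω)
    simpa using this
  have hm2L : m2 ≤ L ^ 2 := by
    have : ∫ ω, (Y j0 ω) ^ 2 ∂P ≤ ∫ _ω, L ^ 2 ∂P :=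
      integral_mono_ae hY2int (integrable_const _)
        (by filter_upwards [hmemY2 j0] with ω hω using hω.2)
    simpa using this
  have hμ2m2 : μ ^ 2 ≤ m2 := by
    have hmem2 : MemLp (Y j0) 2 P :=
      MemLp.of_bound (hmeas j0).aestronglyMeasurable L
        (by filter_upwards [hbound j0] with ω hω using by simpa using hω)
    have hvar := variance_nonneg (Y j0) P
    rw [variance_eq_sub hmem2] at hvar
    have : (∫ ω, (Y j0 ω) ^ 2 ∂P) - μ ^ 2 = m2 - μ ^ 2 := rfl
    simp only [Pi.pow_apply] at hvar
    linarith [hvar]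
  -- pointwise empirical identities
  have hsum_eq : ∀ ω, ∑ i, Y i ω = (k:ℝ) * μhat ω := by
    intro ω
    have : μhat ω = (1 / k : ℝ) * ∑ i, Y i ω := rfl
    rw [this]
    field_simp
  have hsighat : ∀ ω, σsqhat ω = m2hat ω - (μhat ω) ^ 2 := by
    intro ω
    have h1 : σsqhat ω = (1 / k : ℝ) * ∑ i, (Y i ω - μhat ω) ^ 2 := rfl
    have h2 : ∑ i, (Y i ω - μhat ω) ^ 2
        = (∑ i, (Y i ω) ^ 2) - (k:ℝ) * (μhat ω) ^ 2 := by
      calc ∑ i, (Y i ω - μhat ω) ^ 2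
          = ∑ i, ((Y i ω) ^ 2 - (2 * μhat ω) * Y i ω + (μhat ω) ^ 2) :=
            Finset.sum_congr rfl (fun i _ => by ring)
        _ = ((∑ i, (Y i ω) ^ 2) - (2 * μhat ω) * (∑ i, Y i ω)) + (k:ℝ) * (μhat ω) ^ 2 := by
            rw [Finset.sum_add_distrib, Finset.sum_sub_distrib, ← Finset.mul_sum,
              Finset.sum_const, Finset.card_univ, Fintype.card_fin, nsmul_eq_mul]
        _ = (∑ i, (Y i ω) ^ 2) - (k:ℝ) * (μhat ω) ^ 2 := by
            rw [hsum_eq ω]; ring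
    have h3 : m2hat ω = (1 / k : ℝ) * ∑ i, (Y i ω) ^ 2 := rfl
    rw [h1, h2, h3]
    field_simp
    try ring
  have hm2hat_nonneg : ∀ ω, 0 ≤ m2hat ω := by
    intro ω
    have : m2hat ω = (1 / k : ℝ) * ∑ i, (Y i ω) ^ 2 := rfl
    rw [this]
    exact mul_nonneg (by positivity) (Finset.sum_nonneg fun i _ => sq_nonneg _)
  have hμhat_abs : ∀ ω, (∀ i, |Y i ω| ≤ L) → |μhat ω| ≤ L := by
    intro ω hg
    have h1 : μhat ω = (1 / k : ℝ) * ∑ i, Y i ω := rfl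
    rw [h1, abs_mul, abs_of_pos (by positivity : (0:ℝ) < (1/k:ℝ))]
    calc (1 / k : ℝ) * |∑ i, Y i ω| ≤ (1 / k : ℝ) * ∑ i, |Y i ω| := by
          exact mul_le_mul_of_nonneg_left (Finset.abs_sum_le_sum_abs _ _) (by positivity)
      _ ≤ (1 / k : ℝ) * ∑ _i : Fin k, L := by
          exact mul_le_mul_of_nonneg_left (Finset.sum_le_sum fun i _ => hg i) (by positivity)
      _ = L := by
          rw [Finset.sum_const, Finset.card_univ, Fintype.card_fin, nsmul_eq_mul]
          field_simp
  -- the key deterministic bound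
  have key : ∀ ω, (∀ i, |Y i ω| ≤ L) →
      |ρhat ω - ρ| ≤ (|m2hat ω - m2| + 2 * L * |μhat ω - μ|) / ε := by
    intro ω hg
    set A : ℝ := m2hat ω + ε with hA
    set B : ℝ := m2 + ε with hB
    have hApos : 0 < A := by have := hm2hat_nonneg ω; rw [hA]; linarith
    have hBpos : 0 < B := by rw [hB]; nlinarith [hμ2m2, sq_nonneg μ]
    have hρhat_eq : ρhat ω = 1 - (ε + (μhat ω) ^ 2) / A := by
      have h1 : ρhat ω = σsqhat ω / ((μhat ω) ^ 2 + σsqhat ω + ε) := rfl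
      rw [h1, hsighat ω]
      have h2 : (μhat ω) ^ 2 + (m2hat ω - (μhat ω) ^ 2) + ε = A := by rw [hA]; ring
      rw [h2]
      field_simp
      ring
    have hρ_eq : ρ = 1 - (ε + μ ^ 2) / B := by
      have h1 : ρ = σsq / (μ ^ 2 + σsq + ε) := rfl
      have h2 : σsq = m2 - μ ^ 2 := rfl
      rw [h1, h2]
      have h3 : μ ^ 2 + (m2 - μ ^ 2) + ε = B := by rw [hB]; ring
      rw [h3]
      field_simp
      ring
    have hdiff : ρhat ω - ρ
        = (ε + μ ^ 2) * (m2hat ω - m2) / (A * B) - ((μhat ω) ^ 2 - μ ^ 2) / A := by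
      rw [hρhat_eq, hρ_eq, hA, hB]
      have hA0 : m2hat ω + ε ≠ 0 := (by linarith [hm2hat_nonneg ω] : (0:ℝ) < m2hat ω + ε).ne'
      have hB0 : m2 + ε ≠ 0 := (by nlinarith [hμ2m2, sq_nonneg μ] : (0:ℝ) < m2 + ε).ne'
      field_simp
      ring
    rw [hdiff]
    have habs : |(ε + μ ^ 2) * (m2hat ω - m2) / (A * B) - ((μhat ω) ^ 2 - μ ^ 2) / A|
        ≤ |(ε + μ ^ 2) * (m2hat ω - m2) / (A * B)| + |((μhat ω) ^ 2 - μ ^ 2) / A| := by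
      rw [sub_eq_add_neg]
      refine (abs_add_le _ _).trans ?_
      rw [abs_neg]
    refine habs.trans ?_
    have hterm1 : |(ε + μ ^ 2) * (m2hat ω - m2) / (A * B)| ≤ |m2hat ω - m2| / ε := by
      rw [abs_div, abs_mul, abs_of_pos (by positivity : (0:ℝ) < ε + μ ^ 2),
        abs_of_pos (mul_pos hApos hBpos)]
      rw [div_le_div_iff₀ (mul_pos hApos hBpos) hε]
      have hv : 0 ≤ |m2hat ω - m2| := abs_nonneg _
      have h1 : ε + μ ^ 2 ≤ B := by rw [hB]; linarith [hμ2m2]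
      have h2 : ε ≤ A := by have := hm2hat_nonneg ω; rw [hA]; linarith
      nlinarith [mul_le_mul_of_nonneg_left (mul_le_mul h1 h2 hε.le hBpos.le) hv]
    have hterm2 : |((μhat ω) ^ 2 - μ ^ 2) / A| ≤ 2 * L * |μhat ω - μ| / ε := by
      rw [abs_div, abs_of_pos hApos]
      have h2 : ε ≤ A := by have := hm2hat_nonneg ω; rw [hA]; linarith
      have hfac : |(μhat ω) ^ 2 - μ ^ 2| ≤ 2 * L * |μhat ω - μ| := by
        have : (μhat ω) ^ 2 - μ ^ 2 = (μhat ω - μ) * (μhat ω + μ) := by ring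
        rw [this, abs_mul]
        have : |μhat ω + μ| ≤ 2 * L := by
          calc |μhat ω + μ| ≤ |μhat ω| + |μ| := abs_add_le _ _
            _ ≤ L + L := add_le_add (hμhat_abs ω hg) hμL
            _ = 2 * L := by ring
        calc |μhat ω - μ| * |μhat ω + μ| ≤ |μhat ω - μ| * (2 * L) :=
              mul_le_mul_of_nonneg_left this (abs_nonneg _)
          _ = 2 * L * |μhat ω - μ| := by ring
      rw [div_le_div_iff₀ hApos hε]
      exact mul_le_mul hfac h2 hε.le (by positivity)
    calc |(ε + μ ^ 2) * (m2hat ω - m2) / (A * B)| + |((μhat ω) ^ 2 - μ ^ 2) / A|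
        ≤ |m2hat ω - m2| / ε + 2 * L * |μhat ω - μ| / ε := add_le_add hterm1 hterm2
      _ = (|m2hat ω - m2| + 2 * L * |μhat ω - μ|) / ε := by ring
  -- thresholds
  set tv : ℝ := ε * Δ / 4 with htv
  set tu : ℝ := 3 * ε * Δ / (8 * L) with htu
  have htv0 : 0 < tv := by rw [htv]; positivity
  have htu0 : 0 < tu := by rw [htu]; positivity
  -- events
  set Ev : Set Ω := {ω | tv ≤ |m2hat ω - m2|} with hEvdef
  set Eu : Set Ω := {ω | tu ≤ |μhat ω - μ|} with hEudef
  set Gc : Set Ω := {ω | ¬ ∀ i, |Y i ω| ≤ L} with hGcdef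
  have hincl : {ω | Δ ≤ |ρhat ω - ρ|} ⊆ (Ev ∪ Eu) ∪ Gc := by
    intro ω hω
    by_cases hgood : ∀ i, |Y i ω| ≤ L
    · rcases le_or_gt tv |m2hat ω - m2| with h | hv
      · exact Or.inl (Or.inl h)
      rcases le_or_gt tu |μhat ω - μ| with h | hu
      · exact Or.inl (Or.inr h)
      exfalso
      have hkey := key ω hgood
      have hlt : (|m2hat ω - m2| + 2 * L * |μhat ω - μ|) / ε < Δ := by
        rw [div_lt_iff₀ hε]
        have h2L : 2 * L * |μhat ω - μ| < 2 * L * tu :=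
          mul_lt_mul_of_pos_left hu (by positivity)
        have htueq : 2 * L * tu = 3 * ε * Δ / 4 := by
          rw [htu]; field_simp; ring
        have htveq : tv = ε * Δ / 4 := htv
        nlinarith [h2L, hv]
      simp only [Set.mem_setOf_eq] at hω
      linarith [hkey.trans_lt hlt]
    · exact Or.inr hgood
  have hGc0 : P Gc = 0 := by
    have hae : ∀ᵐ ω ∂P, ∀ i, |Y i ω| ≤ L := ae_all_iff.2 hbound
    rw [ae_iff] at hae
    exact hae
  -- Hoeffding bounds for the two events
  have hEv : P Ev ≤ ENNReal.ofReal (2 * Real.exp (-2 * k * tv ^ 2 / (L ^ 2 - 0) ^ 2)) :=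
    hoeff_ineq_abs hk (fun i ω => (Y i ω) ^ 2)
      (fun i => (hmeas i).pow_const 2)
      (hindep.comp (fun _ => fun x : ℝ => x ^ 2) (fun _ => measurable_id.pow_const 2))
      (show (0:ℝ) < L ^ 2 by positivity) hmemY2
      (m := m2) (fun i => ((hident i).comp (measurable_id.pow_const 2)).integral_eq) htv0
  have hEu : P Eu ≤ ENNReal.ofReal (2 * Real.exp (-2 * k * tu ^ 2 / (L - -L) ^ 2)) :=
    hoeff_ineq_abs hk Y hmeas hindep
      (show -L < L by linarith) hmemY
      (m := μ) (fun i => (hident i).integral_eq) htu0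
  -- numeric comparison of the exponents
  set C : ℝ := 32 * M ^ 2 * L ^ 4 * (4 * L ^ 2 + 1) with hC
  have hM2 : M ^ 2 = (ε ^ 2 + L ^ 4) / ε ^ 4 := by
    have hMdef : M = Real.sqrt (ε ^ 2 + L ^ 4) / ε ^ 2 := rfl
    rw [hMdef, div_pow, Real.sq_sqrt (by positivity)]
    ring_nf
  have hCpos : 0 < C := by rw [hC, hM2]; positivity
  have hMe : 1 ≤ M ^ 2 * ε ^ 2 := by
    rw [hM2, div_mul_eq_mul_div, le_div_iff₀ (by positivity)]
    nlinarith [pow_pos hε 4, sq_nonneg (L ^ 2)]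
  have hb : (k:ℝ) * Δ ^ 2 / C ≤ (k:ℝ) * Δ ^ 2 * ε ^ 2 / (32 * L ^ 4) := by
    rw [div_le_div_iff₀ hCpos (by positivity)]
    have hg : 1 ≤ M ^ 2 * ε ^ 2 * (4 * L ^ 2 + 1) := by nlinarith [hMe, sq_nonneg L]
    rw [hC]
    nlinarith [mul_le_mul_of_nonneg_left hg
      (show (0:ℝ) ≤ 32 * (k:ℝ) * Δ ^ 2 * L ^ 4 by positivity)]
  have hv_exp : (k:ℝ) * Δ ^ 2 / C ≤ 2 * k * tv ^ 2 / (L ^ 2 - 0) ^ 2 := by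
    refine hb.trans ?_
    rw [htv, sub_zero, div_le_div_iff₀ (by positivity) (by positivity)]
    nlinarith [mul_pos (mul_pos hk0 (mul_pos (pow_pos hΔ 2) (pow_pos hε 2))) (pow_pos hL 4)]
  have hu_exp : (k:ℝ) * Δ ^ 2 / C ≤ 2 * k * tu ^ 2 / (L - -L) ^ 2 := by
    refine hb.trans ?_
    have h2L : L - -L = 2 * L := by ring
    rw [htu, h2L, div_le_div_iff₀ (by positivity) (by positivity)]
    ring_nf
    have hLinv : L ^ 4 * (L:ℝ)⁻¹ ^ 2 = L ^ 2 := by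
      field_simp
    have hX : (k:ℝ) * Δ ^ 2 * ε ^ 2 * (L ^ 4 * (L:ℝ)⁻¹ ^ 2) = (k:ℝ) * Δ ^ 2 * ε ^ 2 * L ^ 2 := by
      rw [hLinv]
    nlinarith [hX, mul_pos (mul_pos hk0 (mul_pos (pow_pos hΔ 2) (pow_pos hε 2))) (pow_pos hL 2)]
  have he1 : Real.exp (-2 * k * tv ^ 2 / (L ^ 2 - 0) ^ 2) ≤ Real.exp (-((k:ℝ) * Δ ^ 2) / C) := by
    refine Real.exp_le_exp.2 ?_
    have e1 : -2 * (k:ℝ) * tv ^ 2 / (L ^ 2 - 0) ^ 2 = -(2 * k * tv ^ 2 / (L ^ 2 - 0) ^ 2) := by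
      ring
    have e2 : -((k:ℝ) * Δ ^ 2) / C = -((k:ℝ) * Δ ^ 2 / C) := by ring
    rw [e1, e2]
    exact neg_le_neg hv_exp
  have he2 : Real.exp (-2 * k * tu ^ 2 / (L - -L) ^ 2) ≤ Real.exp (-((k:ℝ) * Δ ^ 2) / C) := by
    refine Real.exp_le_exp.2 ?_
    have e1 : -2 * (k:ℝ) * tu ^ 2 / (L - -L) ^ 2 = -(2 * k * tu ^ 2 / (L - -L) ^ 2) := by
      ring
    have e2 : -((k:ℝ) * Δ ^ 2) / C = -((k:ℝ) * Δ ^ 2 / C) := by ring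
    rw [e1, e2]
    exact neg_le_neg hu_exp
  calc P {ω | Δ ≤ |ρhat ω - ρ|} ≤ P ((Ev ∪ Eu) ∪ Gc) := measure_mono hincl
    _ ≤ P (Ev ∪ Eu) + P Gc := measure_union_le _ _
    _ = P (Ev ∪ Eu) := by rw [hGc0, add_zero]
    _ ≤ P Ev + P Eu := measure_union_le _ _
    _ ≤ ENNReal.ofReal (2 * Real.exp (-2 * k * tv ^ 2 / (L ^ 2 - 0) ^ 2)) +
        ENNReal.ofReal (2 * Real.exp (-2 * k * tu ^ 2 / (L - -L) ^ 2)) := add_le_add hEv hEu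
    _ ≤ ENNReal.ofReal (6 * Real.exp (-((k:ℝ) * Δ ^ 2) / C)) := by
        rw [← ENNReal.ofReal_add (by positivity) (by positivity)]
        refine ENNReal.ofReal_le_ofReal ?_
        have := Real.exp_pos (-((k:ℝ) * Δ ^ 2) / C)
        linarith [he1, he2]

end HoeffdingHelpers
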